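/- Zhao's inequality: For every finite simple graph G, |I(G)|² ≤ |I(G × K₂)|, where G × K₂ is the bipartite double cover of G: its vertex set is V(G) × {0,1} and (u,0) is adjacent to (v,1) if and only if u and v are adjacent in G (with no other adjacencies). -/

import Mathlib

/-- The number of independent sets of a graph `G` (a set of vertices no two of which
are adjacent; the empty set counts). -/
noncomputable def numIndep {V : Type*} (G : SimpleGraph V) : ℕ :=
  Nat.card {s : Finset V // ∀ u ∈ s, ∀ v ∈ s, ¬ G.Adj u v}

/-- The bipartite double cover `G × K₂` of `G`: the vertex set is `V × {0,1}`
(modelled as `V × Bool`), with `(u, i)` adjacent to `(v, j)` iff `i ≠ j` and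
`u` is adjacent to `v` in `G`. -/
def doubleCover {V : Type*} (G : SimpleGraph V) : SimpleGraph (V × Bool) where
  Adj x y := x.2 ≠ y.2 ∧ G.Adj x.1 y.1
  symm := ⟨fun x y h => ⟨h.1.symm, G.adj_symm h.2⟩⟩
  loopless := ⟨fun x h => h.1 rfl⟩

namespace ZhaoAux

open Finset

variable {V : Type*} [DecidableEq V] [LinearOrder V] (G : SimpleGraph V)

/-- Independence of a finset. -/
def Indep (A : Finset V) : Prop := ∀ u ∈ A, ∀ v ∈ A, ¬ G.Adj u v

/-- One step of adjacency inside `D`. -/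
def Step (D : Finset V) (a b : V) : Prop := a ∈ D ∧ b ∈ D ∧ G.Adj a b

/-- Reachability inside `D`. -/
def R (D : Finset V) : V → V → Prop := Relation.ReflTransGen (Step G D)

lemma step_symm (D : Finset V) : Symmetric (Step G D) :=
  fun _ _ h => ⟨h.2.1, h.1, h.2.2.symm⟩

lemma r_symm (D : Finset V) : Symmetric (R G D) :=
  fun a b h => (@Relation.ReflTransGen.symmetric _ (Step G D) ⟨step_symm G D⟩).symm a b h

open Classical in
/-- The reachability class of `v` inside `D`. -/
noncomputable def cls (D : Finset V) (v : V) : Finset V :=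
  D.filter (fun u => R G D v u)

open Classical in
lemma mem_cls {D : Finset V} {v u : V} : u ∈ cls G D v ↔ u ∈ D ∧ R G D v u := by
  simp [cls]

lemma mem_cls_self {D : Finset V} {v : V} (hv : v ∈ D) : v ∈ cls G D v :=
  (mem_cls G).2 ⟨hv, Relation.ReflTransGen.refl⟩

lemma cls_eq_of_r {D : Finset V} {u v : V} (h : R G D u v) :
    cls G D u = cls G D v := by
  ext x
  rw [mem_cls, mem_cls]
  exact and_congr_right fun _ =>
    ⟨fun hx => Relation.ReflTransGen.trans (r_symm G D h) hx,
     fun hx => Relation.ReflTransGen.trans h hx⟩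

/-- The canonical representative of the class of `v`. -/
noncomputable def rep (D : Finset V) (v : V) : V :=
  if h : (cls G D v).Nonempty then (cls G D v).min' h else v

lemma rep_eq_of_r {D : Finset V} {u v : V} (hu : u ∈ D) (h : R G D u v) :
    rep G D u = rep G D v := by
  have hce := cls_eq_of_r G h
  have hne : (cls G D u).Nonempty := ⟨u, mem_cls_self G hu⟩
  have hne' : (cls G D v).Nonempty := by rw [← hce]; exact hne
  rw [rep, rep, dif_pos hne, dif_pos hne']
  congr 1

lemma rep_mem_cls {D : Finset V} {v : V} (hv : v ∈ D) : rep G D v ∈ cls G D v := by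
  have hne : (cls G D v).Nonempty := ⟨v, mem_cls_self G hv⟩
  rw [rep, dif_pos hne]
  exact Finset.min'_mem _ hne

lemma rep_mem {D : Finset V} {v : V} (hv : v ∈ D) : rep G D v ∈ D :=
  ((mem_cls G).1 (rep_mem_cls G hv)).1

lemma r_rep {D : Finset V} {v : V} (hv : v ∈ D) : R G D v (rep G D v) :=
  ((mem_cls G).1 (rep_mem_cls G hv)).2

open Classical in
/-- The level at which a vertex of the symmetric difference is placed. -/
noncomputable def levelOf (A D : Finset V) (v : V) : Bool :=
  if rep G D v ∈ A then false else true

variable [Fintype V]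

/-- The injection: a pair of independent sets gives a subset of `V × Bool`. -/
noncomputable def phi (A B : Finset V) : Finset (V × Bool) :=
  Finset.univ.filter (fun p =>
    p.1 ∈ A ∩ B ∨ (p.1 ∈ symmDiff A B ∧ p.2 = levelOf G A (symmDiff A B) p.1))

lemma mem_phi {A B : Finset V} {p : V × Bool} :
    p ∈ phi G A B ↔
      p.1 ∈ A ∩ B ∨ (p.1 ∈ symmDiff A B ∧ p.2 = levelOf G A (symmDiff A B) p.1) := by
  simp [phi]

lemma no_edge_inter {A B : Finset V} (hA : Indep G A) (hB : Indep G B) {u v : V}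
    (hu : u ∈ A ∩ B) (hv : v ∈ A ∪ B) (h : G.Adj u v) : False := by
  rw [Finset.mem_inter] at hu
  rcases Finset.mem_union.1 hv with hv | hv
  · exact hA u hu.1 v hv h
  · exact hB u hu.2 v hv h

lemma symmDiff_subset_union {A B : Finset V} {v : V} (h : v ∈ symmDiff A B) :
    v ∈ A ∪ B := by
  rw [Finset.mem_symmDiff] at h
  rcases h with ⟨h, _⟩ | ⟨h, _⟩
  · exact Finset.mem_union_left _ h
  · exact Finset.mem_union_right _ h

/-- Alternation: along an edge inside the symmetric difference, membership in `A` flips. -/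
lemma alt {A B : Finset V} (hA : Indep G A) (hB : Indep G B) {u v : V}
    (hu : u ∈ symmDiff A B) (hv : v ∈ symmDiff A B) (h : G.Adj u v) :
    v ∈ A ↔ u ∉ A := by
  rw [Finset.mem_symmDiff] at hu hv
  constructor
  · intro hvA huA
    exact hA u huA v hvA h
  · intro huA
    rcases hu with ⟨h1, _⟩ | ⟨h1, _⟩
    · exact absurd h1 huA
    · rcases hv with ⟨h2, _⟩ | ⟨h2, h3⟩
      · exact h2
      · exact absurd (hB u h1 v h2 h) (fun hf => hf)

lemma phi_indep {A B : Finset V} (hA : Indep G A) (hB : Indep G B) :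
    ∀ p ∈ phi G A B, ∀ q ∈ phi G A B, ¬ (doubleCover G).Adj p q := by
  rintro ⟨u, i⟩ hp ⟨v, j⟩ hq ⟨hij, huv⟩
  simp only [] at hij huv
  rw [mem_phi] at hp hq
  rcases hp with hp | ⟨hpD, hpl⟩
  · rcases hq with hq | ⟨hqD, _⟩
    · exact no_edge_inter G hA hB hp (Finset.mem_union_left _ (Finset.mem_inter.1 hq).1) huv
    · exact no_edge_inter G hA hB hp (symmDiff_subset_union hqD) huv
  · rcases hq with hq | ⟨hqD, hql⟩
    · exact no_edge_inter G hA hB hq (symmDiff_subset_union hpD) huv.symm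
    · apply hij
      have hstep : R G (symmDiff A B) u v := Relation.ReflTransGen.single ⟨hpD, hqD, huv⟩
      have hpl' : i = levelOf G A (symmDiff A B) u := hpl
      have hql' : j = levelOf G A (symmDiff A B) v := hql
      show i = j
      rw [hpl', hql', levelOf, levelOf, rep_eq_of_r G hpD hstep]

lemma mem_inter_iff_both {A B : Finset V} {v : V} :
    v ∈ A ∩ B ↔ ((v, false) ∈ phi G A B ∧ (v, true) ∈ phi G A B) := by
  constructor
  · intro h
    exact ⟨(mem_phi G).2 (Or.inl h), (mem_phi G).2 (Or.inl h)⟩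
  · rintro ⟨h0, h1⟩
    rw [mem_phi] at h0 h1
    rcases h0 with h0 | ⟨_, h0⟩
    · exact h0
    rcases h1 with h1 | ⟨_, h1⟩
    · exact h1
    rw [← h0] at h1
    exact absurd h1 (by simp)

lemma mem_union_iff_exists {A B : Finset V} {v : V} :
    v ∈ A ∪ B ↔ ∃ b, (v, b) ∈ phi G A B := by
  constructor
  · intro h
    by_cases hI : v ∈ A ∩ B
    · exact ⟨false, (mem_phi G).2 (Or.inl hI)⟩
    · have hD : v ∈ symmDiff A B := by
        rw [Finset.mem_symmDiff]
        rw [Finset.mem_union] at h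
        rw [Finset.mem_inter] at hI
        tauto
      exact ⟨levelOf G A (symmDiff A B) v, (mem_phi G).2 (Or.inr ⟨hD, rfl⟩)⟩
  · rintro ⟨b, hb⟩
    rw [mem_phi] at hb
    rcases hb with hb | ⟨hb, _⟩
    · exact Finset.mem_union_left _ (Finset.mem_inter.1 hb).1
    · exact symmDiff_subset_union hb

/-- Along reachability, the agreement of `A` and `A'` propagates. -/
lemma chain {A B A' B' : Finset V} (hA : Indep G A) (hB : Indep G B)
    (hA' : Indep G A') (hB' : Indep G B') (hD : symmDiff A B = symmDiff A' B')
    {u w : V} (h : R G (symmDiff A B) u w) (hu : u ∈ symmDiff A B)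
    (hiff : u ∈ A ↔ u ∈ A') : w ∈ symmDiff A B ∧ (w ∈ A ↔ w ∈ A') := by
  induction h with
  | refl => exact ⟨hu, hiff⟩
  | tail _ hstep ih =>
    obtain ⟨hw', hw, hadj⟩ := hstep
    refine ⟨hw, ?_⟩
    have h1 := alt G hA hB hw' hw hadj
    have h2 := alt G hA' hB' (hD ▸ hw') (hD ▸ hw) hadj
    rw [h1, h2, ih.2]

lemma phi_injective {A B A' B' : Finset V} (hA : Indep G A) (hB : Indep G B)
    (hA' : Indep G A') (hB' : Indep G B') (h : phi G A B = phi G A' B') :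
    A = A' ∧ B = B' := by
  have hInter : A ∩ B = A' ∩ B' := by
    ext v
    rw [mem_inter_iff_both G, mem_inter_iff_both G, h]
  have hUnion : A ∪ B = A' ∪ B' := by
    ext v
    rw [mem_union_iff_exists G, mem_union_iff_exists G]
    constructor <;> rintro ⟨b, hb⟩ <;> exact ⟨b, by rw [← h] at *; exact hb⟩
  have hD : symmDiff A B = symmDiff A' B' := by
    rw [symmDiff_eq_sup_sdiff_inf, symmDiff_eq_sup_sdiff_inf]
    simp only [Finset.sup_eq_union, Finset.inf_eq_inter]
    rw [hInter, hUnion]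
  -- levels agree, hence representatives agree on membership in A vs A'
  have hRep : ∀ v ∈ symmDiff A B,
      (rep G (symmDiff A B) v ∈ A ↔ rep G (symmDiff A B) v ∈ A') := by
    intro v hv
    have hmem : (v, levelOf G A (symmDiff A B) v) ∈ phi G A B :=
      (mem_phi G).2 (Or.inr ⟨hv, rfl⟩)
    rw [h, mem_phi] at hmem
    have hvI' : v ∉ A' ∩ B' := by
      rw [← hInter]
      intro hc
      rw [Finset.mem_symmDiff] at hv
      rw [Finset.mem_inter] at hc
      tauto
    rcases hmem with hmem | ⟨_, hmem⟩
    · exact absurd hmem hvI'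
    · simp only [levelOf, ← hD] at hmem
      classical
      by_cases h1 : rep G (symmDiff A B) v ∈ A <;>
        by_cases h2 : rep G (symmDiff A B) v ∈ A' <;>
          simp [h1, h2] at hmem ⊢
  have claim : ∀ v ∈ symmDiff A B, (v ∈ A ↔ v ∈ A') := by
    intro v hv
    have hm : rep G (symmDiff A B) v ∈ symmDiff A B := rep_mem G hv
    have hr : R G (symmDiff A B) (rep G (symmDiff A B) v) v :=
      r_symm G _ (r_rep G hv)
    exact (chain G hA hB hA' hB' hD hr hm (hRep v hv)).2
  have memD : ∀ v : V, v ∈ A → v ∉ B → v ∈ symmDiff A B := by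
    intro v h1 h2
    rw [Finset.mem_symmDiff]; tauto
  have memD' : ∀ v : V, v ∈ B → v ∉ A → v ∈ symmDiff A B := by
    intro v h1 h2
    rw [Finset.mem_symmDiff]; tauto
  have hAA : A = A' := by
    ext v
    constructor
    · intro hv
      by_cases hvB : v ∈ B
      · exact Finset.mem_inter.1 (hInter ▸ Finset.mem_inter.2 ⟨hv, hvB⟩) |>.1
      · exact (claim v (memD v hv hvB)).1 hv
    · intro hv
      by_cases hvB : v ∈ B'
      · exact Finset.mem_inter.1 (hInter.symm ▸ Finset.mem_inter.2 ⟨hv, hvB⟩) |>.1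
      · have : v ∈ symmDiff A B := by
          rw [hD, Finset.mem_symmDiff]; tauto
        exact (claim v this).2 hv
  refine ⟨hAA, ?_⟩
  -- B is determined by A, A ∩ B and A ∆ B
  have hBchar : ∀ (X Y : Finset V), ∀ v : V,
      (v ∈ Y ↔ v ∈ X ∩ Y ∨ (v ∈ symmDiff X Y ∧ v ∉ X)) := by
    intro X Y v
    rw [Finset.mem_inter, Finset.mem_symmDiff]
    constructor
    · intro hv
      by_cases hvX : v ∈ X <;> tauto
    · intro hv
      tauto
  ext v
  rw [hBchar A B v, hBchar A' B' v, hInter, hD, hAA]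

end ZhaoAux

/-- **Zhao's inequality.** For every finite simple graph `G`,
`|I(G)|² ≤ |I(G × K₂)|`, where `G × K₂` is the bipartite double cover of `G`. -/
theorem zhao_inequality {V : Type*} [Fintype V] (G : SimpleGraph V) :
    numIndep G ^ 2 ≤ numIndep (doubleCover G) := by
  classical
  letI : LinearOrder V :=
    LinearOrder.lift' (Fintype.equivFin V) (Fintype.equivFin V).injective
  set I₁ := {s : Finset V // ∀ u ∈ s, ∀ v ∈ s, ¬ G.Adj u v} with hI₁
  set I₂ := {s : Finset (V × Bool) // ∀ u ∈ s, ∀ v ∈ s, ¬ (doubleCover G).Adj u v} with hI₂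
  have hcard : numIndep G ^ 2 = Nat.card (I₁ × I₁) := by
    rw [Nat.card_prod, numIndep, sq]
  rw [hcard]
  refine Nat.card_le_card_of_injective
    (fun p : I₁ × I₁ => (⟨ZhaoAux.phi G p.1.1 p.2.1, ZhaoAux.phi_indep G p.1.2 p.2.2⟩ : I₂)) ?_
  rintro ⟨⟨a, ha⟩, ⟨b, hb⟩⟩ ⟨⟨a', ha'⟩, ⟨b', hb'⟩⟩ hEq
  have hvv : ZhaoAux.phi G a b = ZhaoAux.phi G a' b' := congrArg Subtype.val hEq
  obtain ⟨h1, h2⟩ := ZhaoAux.phi_injective G ha hb ha' hb' hvv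
  simp [h1, h2]
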